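/- For every finite word ω = (ω_1,…,ω_m) over the restricted alphabet I_{n>1} = {(k,n) ∈ I : n > 1} and all z, w in the closed unit disk 𝔻, |φ'_ω(z)| ≤ 5.03661·|φ'_ω(w)|, where φ_ω = φ_{ω_1}∘⋯∘φ_{ω_m}. -/

import Mathlib

open Complex Metric Set
open scoped ENNReal

noncomputable section

/-- λ = √3 -/
def lam : ℝ := Real.sqrt 3

/-- The Möbius map f(z) = ((λ−1)z+1)/(−z+λ+1). -/
def apolF : ℂ → ℂ := fun z => (((lam : ℂ) - 1) * z + 1) / (-z + (lam : ℂ) + 1)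

/-- Rotation by angle θ. -/
def Rot (θ : ℝ) : ℂ → ℂ := fun z => Complex.exp ((θ : ℂ) * Complex.I) * z

/-- θ_k = (−1)^k · 2π/3 -/
def thetaA (k : ℕ) : ℝ := (-1 : ℝ) ^ k * (2 * Real.pi / 3)

/-- θ'_k = 2πk/3 -/
def thetaB (k : ℕ) : ℝ := 2 * Real.pi * k / 3

/-- The Apollonian generators φ_{k,n} = R_{θ'_k} ∘ f^n ∘ R_{θ_k} ∘ f. -/
def phi (k n : ℕ) : ℂ → ℂ := Rot (thetaB k) ∘ (apolF^[n]) ∘ Rot (thetaA k) ∘ apolF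

/-- The closed unit disk 𝔻. -/
def unitD : Set ℂ := Metric.closedBall (0 : ℂ) 1

/-- The Apollonian alphabet I = {1,…,6} × {1,2,3,…}. -/
def apolI : Set (ℕ × ℕ) := {p | 1 ≤ p.1 ∧ p.1 ≤ 6 ∧ 1 ≤ p.2}

/-- Composition φ_{ω₁}∘⋯∘φ_{ω_m} of a finite word ω = (ω₁,…,ω_m). -/
def wordComp (ω : List (ℕ × ℕ)) : ℂ → ℂ :=
  ω.foldr (fun p g => phi p.1 p.2 ∘ g) id




noncomputable section AuxReal

/-- real/imaginary parts of the matrix entries of the Möbius word letters -/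
def cRe (l x y J : ℝ) : ℝ := -(J*x*(l-1)) - (l+J)
def cIm (l x y J : ℝ) : ℝ := -(J*y*(l-1))
def dRe (l x y J : ℝ) : ℝ := -(J*x) + (l+J)*(l+1)
def dIm (l x y J : ℝ) : ℝ := -(J*y)
def aRe (l x y J : ℝ) : ℝ := (l-J)*x*(l-1) - J
def aIm (l x y J : ℝ) : ℝ := (l-J)*y*(l-1)
def bRe (l x y J : ℝ) : ℝ := (l-J)*x + J*(l+1)
def bIm (l x y J : ℝ) : ℝ := (l-J)*y
def alR (l x y J : ℝ) : ℝ :=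
  729/100*((cRe l x y J)^2 + (cIm l x y J)^2) - ((aRe l x y J)^2 + (aIm l x y J)^2)
def btRe (l x y J : ℝ) : ℝ :=
  729/100*(dRe l x y J * cRe l x y J + dIm l x y J * cIm l x y J)
    - (bRe l x y J * aRe l x y J + bIm l x y J * aIm l x y J)
def btIm (l x y J : ℝ) : ℝ :=
  729/100*(dRe l x y J * cIm l x y J - dIm l x y J * cRe l x y J)
    - (bRe l x y J * aIm l x y J - bIm l x y J * aRe l x y J)

lemma lemR1 (l x y J : ℝ) (hl2 : l^2 = 3) (hx : x = -1/2) (hy : y^2 = 3/4)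
    (hl : 173/100 ≤ l) (hl' : l ≤ 7/4) (hJ : 1 ≤ J) :
    729/100 * ((cRe l x y J)^2 + (cIm l x y J)^2) < (dRe l x y J)^2 + (dIm l x y J)^2 := by
  subst hx
  have e : (dRe l (-1/2) y J)^2 + (dIm l (-1/2) y J)^2
      - 729/100 * ((cRe l (-1/2) y J)^2 + (cIm l (-1/2) y J)^2) = (-987/100 : ℝ) + (3687/100 : ℝ) * J + (-1887/50 : ℝ) * J^2 + (6 : ℝ) * l + (-1287/100 : ℝ) * l * J + (2487/100 : ℝ) * l * J^2 := by
    simp only [cRe, cIm, dRe, dIm]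
    linear_combination ((-629/100 : ℝ) * J^2 + (729/50 : ℝ) * l * J^2 + (-729/100 : ℝ) * l^2 * J^2) * hy + ((-329/100 : ℝ) + (1229/100 : ℝ) * J + (-629/100 : ℝ) * J^2 + (2 : ℝ) * l + (2 : ℝ) * l * J + (1 : ℝ) * l^2) * hl2
  have h1 : (0:ℝ) ≤ (3687/100 - 1287/100*l)*J := mul_nonneg (by linarith) (by linarith)
  have h2 : (0:ℝ) ≤ (-1887/50 + 2487/100*l)*J^2 := mul_nonneg (by linarith) (sq_nonneg J)
  nlinarith [e, h1, h2]

lemma lemR2 (l x y J : ℝ) (hl2 : l^2 = 3) (hx : x = -1/2) (hy : y^2 = 3/4)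
    (hl : 173/100 ≤ l) (hl' : l ≤ 7/4) (hJ : 1 ≤ J) :
    0 < alR l x y J := by
  subst hx
  have e : alR l (-1/2) y J = (987/100 : ℝ) + (-3687/100 : ℝ) * J + (1887/50 : ℝ) * J^2 + (6 : ℝ) * l + (3087/100 : ℝ) * l * J + (-1887/100 : ℝ) * l * J^2 := by
    simp only [alR, cRe, cIm, aRe, aIm]
    linear_combination ((629/100 : ℝ) * J^2 + (2 : ℝ) * l * J + (-629/50 : ℝ) * l * J^2 + (-1 : ℝ) * l^2 + (-4 : ℝ) * l^2 * J + (629/100 : ℝ) * l^2 * J^2 + (2 : ℝ) * l^3 + (2 : ℝ) * l^3 * J + (-1 : ℝ) * l^4) * hy + ((329/100 : ℝ) + (-1229/100 : ℝ) * J + (629/100 : ℝ) * J^2 + (2 : ℝ) * l + (2 : ℝ) * l * J + (-1 : ℝ) * l^2) * hl2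
  have h1 : (0:ℝ) ≤ (-3687/100 + 3087/100*l)*J := mul_nonneg (by linarith) (by linarith)
  have h2 : (0:ℝ) ≤ (1887/50 - 1887/100*l)*J^2 := mul_nonneg (by linarith) (sq_nonneg J)
  nlinarith [e, h1, h2]

set_option maxHeartbeats 2000000 in
lemma lemR3 (l x y J : ℝ) (hl2 : l^2 = 3) (hx : x = -1/2) (hy : y^2 = 3/4)
    (hl : 173/100 ≤ l) (hl' : l ≤ 7/4) (hJ : 2 ≤ J) :
    729/100 * (alR l x y J + 9)^2 ≤ (btRe l x y J)^2 + (btIm l x y J)^2 := by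
  subst hx
  have e : (btRe l (-1/2) y J)^2 + (btIm l (-1/2) y J)^2
      - 729/100 * (alR l (-1/2) y J + 9)^2 = (-1171493001/1000000 : ℝ) + (2661089751/500000 : ℝ) * J + (-4068274401/125000 : ℝ) * J^2 + (4647913101/100000 : ℝ) * J^3 + (-17814527307/1000000 : ℝ) * J^4 + (-3560769/5000 : ℝ) * l + (-1460612151/500000 : ℝ) * l * J + (621644247/31250 : ℝ) * l * J^2 + (-13095721503/500000 : ℝ) * l * J^3 + (2595800601/250000 : ℝ) * l * J^4 := by
    simp only [alR, btRe, btIm, cRe, cIm, dRe, dIm, aRe, aIm, bRe, bIm]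
    linear_combination ((-4126869/5000 : ℝ) * J^2 + (-5226021969/4000000 : ℝ) * J^4 + (-248858189/1000000 : ℝ) * y^2 * J^4 + (-6561/25 : ℝ) * l * J + (4126869/2500 : ℝ) * l * J^2 + (-1161997617/500000 : ℝ) * l * J^3 + (829659177/200000 : ℝ) * l * J^4 + (-395641/2500 : ℝ) * l * y^2 * J^3 + (268640239/250000 : ℝ) * l * y^2 * J^4 + (6561/50 : ℝ) * l^2 + (13122/25 : ℝ) * l^2 * J + (-109494433/62500 : ℝ) * l^2 * J^2 + (3298404923/500000 : ℝ) * l^2 * J^3 + (-9079565309/2000000 : ℝ) * l^2 * J^4 + (269841/5000 : ℝ) * l^2 * y^2 * J^2 + (427091/625 : ℝ) * l^2 * y^2 * J^3 + (-845484817/500000 : ℝ) * l^2 * y^2 * J^4 + (-6561/25 : ℝ) * l^3 + (-633509/5000 : ℝ) * l^3 * J + (535552089/250000 : ℝ) * l^3 * J^2 + (-596902759/100000 : ℝ) * l^3 * J^3 + (2058520123/1000000 : ℝ) * l^3 * J^4 + (629/25 : ℝ) * l^3 * y^2 * J + (-291291/1250 : ℝ) * l^3 * y^2 * J^2 + (-1344173/1250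 : ℝ) * l^3 * y^2 * J^3 + (288422289/250000 : ℝ) * l^3 * y^2 * J^4 + (2150657/10000 : ℝ) * l^4 + (-2409123/5000 : ℝ) * l^4 * J + (-570716839/500000 : ℝ) * l^4 * J^2 + (962741739/500000 : ℝ) * l^4 * J^3 + (-256771009/800000 : ℝ) * l^4 * J^4 + (-629/100 : ℝ) * l^4 * y^2 + (-2716/25 : ℝ) * l^4 * y^2 * J + (916773/2500 : ℝ) * l^4 * y^2 * J^2 + (458541/625 : ℝ) * l^4 * y^2 * J^3 + (-288422289/1000000 : ℝ) * l^4 * y^2 * J^4 + (-223283/1250 : ℝ) * l^5 + (2922973/5000 : ℝ) * l^5 * J + (-381057/2500 : ℝ) * l^5 * J^2 + (-1249823/10000 : ℝ) * l^5 * J^3 + (679/25 : ℝ) * l^5 * y^2 + (4274/25 : ℝ) * l^5 * y^2 * J + (-312741/1250 : ℝ) * l^5 * y^2 * J^2 + (-458541/2500 : ℝ) * l^5 * y^2 * J^3 + (42152/625 : ℝ) * l^6 + (-1374791/5000 : ℝ) * l^6 * J + (2938187/20000 : ℝ) * l^6 * J^2 + (-2137/50 : ℝ) * l^6 * y^2 +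 (-2916/25 : ℝ) * l^6 * y^2 * J + (312741/5000 : ℝ) * l^6 * y^2 * J^2 + (729/20 : ℝ) * l^7 + (729/20 : ℝ) * l^7 * J + (729/25 : ℝ) * l^7 * y^2 + (729/25 : ℝ) * l^7 * y^2 * J + (-729/80 : ℝ) * l^8 + (-729/100 : ℝ) * l^8 * y^2) * hy + ((-193667667/1000000 : ℝ) + (887029917/500000 : ℝ) * J + (-626459871/62500 : ℝ) * J^2 + (1549304367/100000 : ℝ) * J^3 + (-2595800601/500000 : ℝ) * J^4 + (-1186923/5000 : ℝ) * l + (57036183/500000 : ℝ) * l * J + (725687271/125000 : ℝ) * l * J^2 + (-1690640667/250000 : ℝ) * l * J^3 + (865266867/500000 : ℝ) * l * J^4 + (210568711/1000000 : ℝ) * l^2 + (26894339/500000 : ℝ) * l^2 * J + (-1271454567/1000000 : ℝ) * l^2 * J^2 + (799107389/500000 : ℝ) * l^2 * J^3 + (-248858189/1000000 : ℝ) * l^2 * J^4 + (41759/5000 : ℝ) * l^3 + (7814769/10000 : ℝ) * l^3 * J + (-2565969/10000 : ℝ) * l^3 * J^2 + (-395641/5000 : ℝ) * l^3 * J^3 +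 (1094023/10000 : ℝ) * l^4 + (-3062323/10000 : ℝ) * l^4 * J + (1312723/10000 : ℝ) * l^4 * J^2 + (729/25 : ℝ) * l^5 + (729/25 : ℝ) * l^5 * J + (-729/100 : ℝ) * l^6) * hl2
  have hm : (0:ℝ) ≤ J - 2 := by linarith
  have q0 : (0:ℝ) ≤ -33911303661/1000000 + 7403888907/250000*l := by linarith
  have q1 : (0:ℝ) ≤ -68588951517/500000 + 9461440017/100000*l := by linarith
  have q2 : (0:ℝ) ≤ -45305016129/250000 + 27985203891/250000*l := by linarith
  have q3 : (0:ℝ) ≤ -48018543723/500000 + 28437088113/500000*l := by linarith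
  have q4 : (0:ℝ) ≤ -17814527307/1000000 + 2595800601/250000*l := by linarith
  have e2 : ((-1171493001/1000000 : ℝ) + (2661089751/500000 : ℝ) * J + (-4068274401/125000 : ℝ) * J^2 + (4647913101/100000 : ℝ) * J^3 + (-17814527307/1000000 : ℝ) * J^4 + (-3560769/5000 : ℝ) * l + (-1460612151/500000 : ℝ) * l * J + (621644247/31250 : ℝ) * l * J^2 + (-13095721503/500000 : ℝ) * l * J^3 + (2595800601/250000 : ℝ) * l * J^4)
      = (-33911303661/1000000 + 7403888907/250000*l)
      + (-68588951517/500000 + 9461440017/100000*l)*(J-2)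
      + (-45305016129/250000 + 27985203891/250000*l)*(J-2)^2
      + (-48018543723/500000 + 28437088113/500000*l)*(J-2)^3
      + (-17814527307/1000000 + 2595800601/250000*l)*(J-2)^4 := by ring
  nlinarith [e, e2, mul_nonneg q1 hm, mul_nonneg q2 (pow_nonneg hm 2),
    mul_nonneg q3 (pow_nonneg hm 3), mul_nonneg q4 (pow_nonneg hm 4), q0]

set_option maxHeartbeats 1000000 in
lemma lemR4 (l x y J zr zi : ℝ) (hl2 : l^2 = 3) (hx : x = -1/2) (hy : y^2 = 3/4) :
    alR l x y J * (729/100*((cRe l x y J * zr - cIm l x y J * zi + dRe l x y J)^2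
        + (cRe l x y J * zi + cIm l x y J * zr + dIm l x y J)^2)
      - ((aRe l x y J * zr - aIm l x y J * zi + bRe l x y J)^2
        + (aRe l x y J * zi + aIm l x y J * zr + bIm l x y J)^2))
    = (alR l x y J * zr + btRe l x y J)^2 + (alR l x y J * zi - btIm l x y J)^2
      - 59049/100 := by
  subst hx
  simp only [alR, btRe, btIm, cRe, cIm, dRe, dIm, aRe, aIm, bRe, bIm]
  linear_combination ((-729/100 : ℝ) * l^8) * hy + ((-19683/100 : ℝ) + (-6561/100 : ℝ) * l^2 + (-2187/100 : ℝ) * l^4 + (-729/100 : ℝ) * l^6) * hl2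

end AuxReal

noncomputable section Main

lemma lam_pos : 0 < lam := Real.sqrt_pos.mpr (by norm_num)

lemma lam_sq : lam^2 = 3 := Real.sq_sqrt (by norm_num)

lemma lam_lb : 173/100 ≤ lam := by nlinarith [lam_sq, lam_pos]

lemma lam_ub : lam ≤ 7/4 := by nlinarith [lam_sq, lam_pos]

lemma lamC_sq : (lam:ℂ)^2 = 3 := by
  rw [← Complex.ofReal_pow, lam_sq]; norm_num

lemma lamC_ne : (lam:ℂ) ≠ 0 := by
  simpa using Complex.ofReal_ne_zero.mpr (ne_of_gt lam_pos)

open Complex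

/-- Matrix entries of the Möbius transformation `z ↦ f^n (u * f z)` (up to the final rotation). -/
def Cc (u : ℂ) (n : ℕ) : ℂ := -(n:ℂ)*u*((lam:ℂ)-1) - ((lam:ℂ)+(n:ℂ))
def Dd (u : ℂ) (n : ℕ) : ℂ := -(n:ℂ)*u + ((lam:ℂ)+(n:ℂ))*((lam:ℂ)+1)
def Aa (u : ℂ) (n : ℕ) : ℂ := ((lam:ℂ)-(n:ℂ))*u*((lam:ℂ)-1) - (n:ℂ)
def Bb (u : ℂ) (n : ℕ) : ℂ := ((lam:ℂ)-(n:ℂ))*u + (n:ℂ)*((lam:ℂ)+1)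
def Bt (u : ℂ) (n : ℕ) : ℂ :=
  ((729/100:ℝ):ℂ)*(starRingEnd ℂ (Dd u n) * Cc u n) - starRingEnd ℂ (Bb u n) * Aa u n

lemma brC (u : ℂ) (n : ℕ) : Complex.normSq (Cc u n)
    = (cRe lam u.re u.im (n:ℝ))^2 + (cIm lam u.re u.im (n:ℝ))^2 := by
  simp only [Complex.normSq_apply, Complex.add_re, Complex.add_im, Complex.mul_re, Complex.mul_im, Complex.sub_re, Complex.sub_im, Complex.neg_re, Complex.neg_im, Complex.one_re, Complex.one_im, Complex.ofReal_re, Complex.ofReal_im, Complex.natCast_re, Complex.natCast_im, Complex.conj_re, Complex.conj_im, Cc, cRe, cIm]; ring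

lemma brD (u : ℂ) (n : ℕ) : Complex.normSq (Dd u n)
    = (dRe lam u.re u.im (n:ℝ))^2 + (dIm lam u.re u.im (n:ℝ))^2 := by
  simp only [Complex.normSq_apply, Complex.add_re, Complex.add_im, Complex.mul_re, Complex.mul_im, Complex.sub_re, Complex.sub_im, Complex.neg_re, Complex.neg_im, Complex.one_re, Complex.one_im, Complex.ofReal_re, Complex.ofReal_im, Complex.natCast_re, Complex.natCast_im, Complex.conj_re, Complex.conj_im, Dd, dRe, dIm]; ring

lemma brCD (u : ℂ) (n : ℕ) (z : ℂ) : Complex.normSq (Cc u n * z + Dd u n)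
    = (cRe lam u.re u.im (n:ℝ) * z.re - cIm lam u.re u.im (n:ℝ) * z.im + dRe lam u.re u.im (n:ℝ))^2
    + (cRe lam u.re u.im (n:ℝ) * z.im + cIm lam u.re u.im (n:ℝ) * z.re + dIm lam u.re u.im (n:ℝ))^2 := by
  simp only [Complex.normSq_apply, Complex.add_re, Complex.add_im, Complex.mul_re, Complex.mul_im, Complex.sub_re, Complex.sub_im, Complex.neg_re, Complex.neg_im, Complex.one_re, Complex.one_im, Complex.ofReal_re, Complex.ofReal_im, Complex.natCast_re, Complex.natCast_im, Complex.conj_re, Complex.conj_im, Cc, Dd, cRe, cIm, dRe, dIm]; ring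

lemma brAB (u : ℂ) (n : ℕ) (z : ℂ) : Complex.normSq (Aa u n * z + Bb u n)
    = (aRe lam u.re u.im (n:ℝ) * z.re - aIm lam u.re u.im (n:ℝ) * z.im + bRe lam u.re u.im (n:ℝ))^2
    + (aRe lam u.re u.im (n:ℝ) * z.im + aIm lam u.re u.im (n:ℝ) * z.re + bIm lam u.re u.im (n:ℝ))^2 := by
  simp only [Complex.normSq_apply, Complex.add_re, Complex.add_im, Complex.mul_re, Complex.mul_im, Complex.sub_re, Complex.sub_im, Complex.neg_re, Complex.neg_im, Complex.one_re, Complex.one_im, Complex.ofReal_re, Complex.ofReal_im, Complex.natCast_re, Complex.natCast_im, Complex.conj_re, Complex.conj_im, Aa, Bb, aRe, aIm, bRe, bIm]; ring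

set_option maxHeartbeats 1000000 in
lemma brBt (u : ℂ) (n : ℕ) : Complex.normSq (Bt u n)
    = (btRe lam u.re u.im (n:ℝ))^2 + (btIm lam u.re u.im (n:ℝ))^2 := by
  simp only [Complex.normSq_apply, Complex.add_re, Complex.add_im, Complex.mul_re, Complex.mul_im, Complex.sub_re, Complex.sub_im, Complex.neg_re, Complex.neg_im, Complex.one_re, Complex.one_im, Complex.ofReal_re, Complex.ofReal_im, Complex.natCast_re, Complex.natCast_im, Complex.conj_re, Complex.conj_im, Bt, Cc, Dd, Aa, Bb, btRe, btIm, cRe, cIm, dRe, dIm, aRe, aIm, bRe, bIm]; ring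

set_option maxHeartbeats 1000000 in
lemma brXi (u : ℂ) (n : ℕ) (z : ℂ) :
    Complex.normSq (((alR lam u.re u.im (n:ℝ) : ℝ):ℂ) * z + starRingEnd ℂ (Bt u n))
    = (alR lam u.re u.im (n:ℝ) * z.re + btRe lam u.re u.im (n:ℝ))^2
    + (alR lam u.re u.im (n:ℝ) * z.im - btIm lam u.re u.im (n:ℝ))^2 := by
  simp only [Complex.normSq_apply, Complex.add_re, Complex.add_im, Complex.mul_re, Complex.mul_im, Complex.sub_re, Complex.sub_im, Complex.neg_re, Complex.neg_im, Complex.one_re, Complex.one_im, Complex.ofReal_re, Complex.ofReal_im, Complex.natCast_re, Complex.natCast_im, Complex.conj_re, Complex.conj_im, Bt, Cc, Dd, Aa, Bb, alR, btRe, btIm, cRe, cIm, dRe, dIm, aRe, aIm, bRe, bIm]; ring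

/-- the pole of each partial Möbius map lies outside the disk of radius 27/10 -/
lemma pole_ne (j : ℕ) (hj : 1 ≤ j) (u : ℂ) (hx : u.re = -1/2) (hy : u.im^2 = 3/4)
    (z : ℂ) (hz : ‖z‖ ≤ 27/10) : Cc u j * z + Dd u j ≠ 0 := by
  intro h
  have hJ : (1:ℝ) ≤ (j:ℝ) := by exact_mod_cast hj
  have h1 := lemR1 lam u.re u.im (j:ℝ) lam_sq hx hy lam_lb lam_ub hJ
  have h2 : Dd u j = -(Cc u j * z) := by linear_combination h
  have h3 : Complex.normSq (Dd u j) = Complex.normSq (Cc u j) * Complex.normSq z := by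
    rw [h2, Complex.normSq_neg, Complex.normSq_mul]
  have h4 : Complex.normSq z ≤ 729/100 := by
    rw [← Complex.sq_norm]; nlinarith [norm_nonneg z]
  have h5 := brC u j
  have h6 := brD u j
  nlinarith [Complex.normSq_nonneg (Cc u j), Complex.normSq_nonneg z]

/-- main value bound: the Möbius map sends the 27/10-disk into itself -/
lemma value_key (n : ℕ) (hn : 2 ≤ n) (u : ℂ) (hx : u.re = -1/2) (hy : u.im^2 = 3/4)
    (z : ℂ) (hz : ‖z‖ ≤ 27/10) :
    Complex.normSq (Aa u n * z + Bb u n) ≤ 729/100 * Complex.normSq (Cc u n * z + Dd u n) := by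
  have hJ1 : (1:ℝ) ≤ (n:ℝ) := by exact_mod_cast Nat.one_le_of_lt hn
  have hJ2 : (2:ℝ) ≤ (n:ℝ) := by exact_mod_cast hn
  set α := alR lam u.re u.im (n:ℝ) with hαdef
  have hα : 0 < α := lemR2 lam u.re u.im (n:ℝ) lam_sq hx hy lam_lb lam_ub hJ1
  have hβ2 := lemR3 lam u.re u.im (n:ℝ) lam_sq hx hy lam_lb lam_ub hJ2
  have hbt := brBt u n
  -- |Bt| ≥ (27/10)(α+9)
  have habs : 27/10 * (α + 9) ≤ ‖Bt u n‖ := by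
    nlinarith [norm_nonneg (Bt u n), Complex.sq_norm (Bt u n), hα]
  -- lower bound for |α z + conj β|
  set ξ := ((α:ℝ):ℂ) * z + starRingEnd ℂ (Bt u n) with hξdef
  have ht1 : ‖starRingEnd ℂ (Bt u n)‖ = ‖Bt u n‖ := Complex.norm_conj _
  have ht2 : ‖((α:ℝ):ℂ) * z‖ = α * ‖z‖ := by
    rw [norm_mul, Complex.norm_real, Real.norm_eq_abs, abs_of_pos hα]
  have ht3 : ‖Bt u n‖ ≤ ‖ξ‖ + α * ‖z‖ := by
    calc ‖Bt u n‖ = ‖ξ + (-(((α:ℝ):ℂ) * z))‖ := by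
          rw [← ht1]; congr 1; rw [hξdef]; ring
    _ ≤ ‖ξ‖ + ‖-(((α:ℝ):ℂ) * z)‖ := norm_add_le _ _
    _ = ‖ξ‖ + α * ‖z‖ := by rw [norm_neg, ht2]
  have ht4 : α * ‖z‖ ≤ α * (27/10) := by
    exact mul_le_mul_of_nonneg_left hz hα.le
  have hξabs : 243/10 ≤ ‖ξ‖ := by linarith
  have hξ2 : 59049/100 ≤ Complex.normSq ξ := by
    rw [← Complex.sq_norm]; nlinarith
  have hkey : α * (729/100 * Complex.normSq (Cc u n * z + Dd u n)
      - Complex.normSq (Aa u n * z + Bb u n)) = Complex.normSq ξ - 59049/100 := by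
    rw [brCD, brAB, hξdef, brXi]
    exact lemR4 lam u.re u.im (n:ℝ) z.re z.im lam_sq hx hy
  nlinarith [hkey, hα, hξ2]

/-- Closed form for the iterates of the parabolic map f. -/
lemma iter_apolF (n : ℕ) (w : ℂ)
    (h : ∀ j : ℕ, 1 ≤ j → j ≤ n → -(j:ℂ)*w + (lam:ℂ) + (j:ℂ) ≠ 0) :
    apolF^[n] w = (((lam:ℂ) - (n:ℂ))*w + (n:ℂ)) / (-(n:ℂ)*w + (lam:ℂ) + (n:ℂ)) := by
  induction n with
  | zero =>
      simp only [Function.iterate_zero, id_eq, Nat.cast_zero, neg_zero, zero_mul, sub_zero,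
        add_zero, zero_add]
      rw [mul_comm, mul_div_assoc, div_self lamC_ne, mul_one]
  | succ n ih =>
      have hq : -(n:ℂ)*w + (lam:ℂ) + (n:ℂ) ≠ 0 := by
        rcases Nat.eq_zero_or_pos n with h0 | h1
        · subst h0; simpa using lamC_ne
        · exact h n h1 (Nat.le_succ n)
      have hq' : -((n+1:ℕ):ℂ)*w + (lam:ℂ) + ((n+1:ℕ):ℂ) ≠ 0 := h (n+1) (by omega) le_rfl
      rw [Function.iterate_succ_apply', ih (fun j h1 h2 => h j h1 (by omega))]
      show apolF ((((lam:ℂ) - (n:ℂ))*w + (n:ℂ)) / (-(n:ℂ)*w + (lam:ℂ) + (n:ℂ))) = _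
      push_cast at hq' ⊢
      rw [apolF]
      have h1 : ((lam:ℂ)-1)*(((((lam:ℂ) - (n:ℂ))*w + (n:ℂ))) / (-(n:ℂ)*w + (lam:ℂ) + (n:ℂ))) + 1
          = ((lam:ℂ)*(((lam:ℂ) - ((n:ℂ)+1))*w + ((n:ℂ)+1))) / (-(n:ℂ)*w + (lam:ℂ) + (n:ℂ)) := by
        rw [← mul_div_assoc, div_add' _ _ _ hq]
        congr 1
        ring
      have h2 : -(((((lam:ℂ) - (n:ℂ))*w + (n:ℂ))) / (-(n:ℂ)*w + (lam:ℂ) + (n:ℂ))) + (lam:ℂ) + 1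
          = ((lam:ℂ)*(-((n:ℂ)+1)*w + (lam:ℂ) + ((n:ℂ)+1))) / (-(n:ℂ)*w + (lam:ℂ) + (n:ℂ)) := by
        rw [← neg_div, div_add' _ _ _ hq, div_add' _ _ _ hq]
        congr 1
        ring
      rw [h1, h2, div_div_div_cancel_right₀ hq, mul_div_mul_left _ _ lamC_ne]

/-- The distortion-controlling property of a holomorphic map on the 27/10-disk. -/
def GoodMap (f : ℂ → ℂ) : Prop :=
  ∃ a b c d : ℂ, a*d - b*c ≠ 0 ∧
    ∀ z : ℂ, ‖z‖ ≤ 27/10 →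
      (c*z + d ≠ 0 ∧ f z = (a*z+b)/(c*z+d) ∧ ‖f z‖ ≤ 27/10)

lemma goodMap_id : GoodMap id := by
  refine ⟨1, 0, 0, 1, by norm_num, fun z hz => ⟨by norm_num, by simp, hz⟩⟩

lemma GoodMap.comp {f g : ℂ → ℂ} (hf : GoodMap f) (hg : GoodMap g) : GoodMap (f ∘ g) := by
  obtain ⟨a,b,c,d,hdet,H⟩ := hf
  obtain ⟨a',b',c',d',hdet',H'⟩ := hg
  refine ⟨a*a'+b*c', a*b'+b*d', c*a'+d*c', c*b'+d*d', ?_, ?_⟩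
  · have e : (a*a'+b*c')*(c*b'+d*d') - (a*b'+b*d')*(c*a'+d*c')
        = (a*d-b*c)*(a'*d'-b'*c') := by ring
    rw [e]; exact mul_ne_zero hdet hdet'
  · intro z hz
    obtain ⟨h1', h2', h3'⟩ := H' z hz
    obtain ⟨h1, h2, h3⟩ := H (g z) h3'
    have hBrw : c * g z + d = (c*(a'*z+b') + d*(c'*z+d'))/(c'*z+d') := by
      rw [h2', ← mul_div_assoc, div_add' _ _ _ h1']
    have hB : c*(a'*z+b') + d*(c'*z+d') ≠ 0 := by
      intro h0
      rw [hBrw, h0, zero_div] at h1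
      exact h1 rfl
    have e1 : (c*a'+d*c')*z + (c*b'+d*d') = (c*(a'*z+b') + d*(c'*z+d')) := by ring
    refine ⟨by rw [e1]; exact hB, ?_, h3⟩
    show f (g z) = _
    rw [h2, h2']
    have e2 : a * ((a'*z+b')/(c'*z+d')) + b = (a*(a'*z+b') + b*(c'*z+d'))/(c'*z+d') := by
      rw [← mul_div_assoc, div_add' _ _ _ h1']
    have e3 : c * ((a'*z+b')/(c'*z+d')) + d = (c*(a'*z+b') + d*(c'*z+d'))/(c'*z+d') := by
      rw [← mul_div_assoc, div_add' _ _ _ h1']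
    rw [e2, e3, div_div_div_cancel_right₀ h1']
    rw [e1]
    congr 1
    ring

lemma u_facts (k : ℕ) : (Complex.exp ((thetaA k : ℂ) * I)).re = -1/2 ∧
    (Complex.exp ((thetaA k : ℂ) * I)).im^2 = 3/4 := by
  rw [Complex.exp_ofReal_mul_I_re, Complex.exp_ofReal_mul_I_im]
  have h3 : 2*Real.pi/3 = Real.pi - Real.pi/3 := by ring
  have hc : Real.cos (2*Real.pi/3) = -(1/2) := by
    rw [h3, Real.cos_pi_sub, Real.cos_pi_div_three]
  have hs : Real.sin (2*Real.pi/3) = Real.sqrt 3 / 2 := by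
    rw [h3, Real.sin_pi_sub, Real.sin_pi_div_three]
  have hs2 : (Real.sqrt 3 / 2)^2 = 3/4 := by
    rw [div_pow, Real.sq_sqrt] <;> norm_num
  unfold thetaA
  rcases Nat.even_or_odd k with he | ho
  · rw [he.neg_one_pow, one_mul, hc, hs]
    exact ⟨by norm_num, hs2⟩
  · rw [ho.neg_one_pow, neg_one_mul, Real.cos_neg, Real.sin_neg, hc, hs]
    constructor
    · norm_num
    · rw [neg_pow]; simpa using hs2

lemma goodMap_phi (k n : ℕ) (hn : 2 ≤ n) : GoodMap (phi k n) := by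
  set u := Complex.exp ((thetaA k : ℂ) * I) with hu
  set v := Complex.exp ((thetaB k : ℂ) * I) with hv
  obtain ⟨hx, hy⟩ := u_facts k
  have hvabs : ‖v‖ = 1 := Complex.norm_exp_ofReal_mul_I _
  have hu0 : u ≠ 0 := Complex.exp_ne_zero _
  have hv0 : v ≠ 0 := Complex.exp_ne_zero _
  refine ⟨v * Aa u n, v * Bb u n, Cc u n, Dd u n, ?_, ?_⟩
  · have h9 : Aa u n * Dd u n - Bb u n * Cc u n = 9*u := by
      unfold Aa Bb Cc Dd
      linear_combination (u*((lam:ℂ)^2+3)) * lamC_sq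
    have e : v * Aa u n * (Dd u n) - v * Bb u n * (Cc u n) = v*(9*u) := by
      linear_combination v * h9
    rw [e]
    exact mul_ne_zero hv0 (mul_ne_zero (by norm_num) hu0)
  · intro z hz
    have he : (-z + (lam:ℂ) + 1) ≠ 0 := by
      intro h0
      have hzeq : z = (lam:ℂ) + 1 := by linear_combination -h0
      rw [hzeq, show ((lam:ℂ)+1) = (((lam+1:ℝ)):ℂ) by push_cast; ring,
        Complex.norm_real, Real.norm_eq_abs, abs_of_pos (by linarith [lam_lb] : (0:ℝ) < lam+1)] at hz
      linarith [lam_lb]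
    have hfz : apolF z = (((lam:ℂ)-1)*z+1)/(-z+(lam:ℂ)+1) := rfl
    have hden : ∀ j : ℕ, -(j:ℂ)*(u * apolF z) + (lam:ℂ) + (j:ℂ)
        = (Cc u j * z + Dd u j)/(-z+(lam:ℂ)+1) := by
      intro j
      rw [hfz]; unfold Cc Dd; field_simp; ring
    have hne : ∀ j : ℕ, 1 ≤ j → -(j:ℂ)*(u * apolF z) + (lam:ℂ) + (j:ℂ) ≠ 0 := by
      intro j hj
      rw [hden j]
      exact div_ne_zero (pole_ne j hj u hx hy z hz) he
    have hiter := iter_apolF n (u * apolF z) (fun j h1 _ => hne j h1)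
    have hnum : ((lam:ℂ)-(n:ℂ))*(u*apolF z) + (n:ℂ) = (Aa u n * z + Bb u n)/(-z+(lam:ℂ)+1) := by
      rw [hfz]; unfold Aa Bb; field_simp; ring
    have hCzD : Cc u n * z + Dd u n ≠ 0 := pole_ne n (by omega) u hx hy z hz
    have hphiz : phi k n z = (v * Aa u n * z + v * Bb u n)/(Cc u n * z + Dd u n) := by
      show v * (apolF^[n] (u * apolF z)) = _
      rw [hiter, hnum, hden n, div_div_div_cancel_right₀ he, ← mul_div_assoc]
      congr 1
      ring
    refine ⟨hCzD, hphiz, ?_⟩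
    rw [hphiz, show v * Aa u n * z + v * Bb u n = v*(Aa u n * z + Bb u n) by ring,
      norm_div, norm_mul, hvabs, one_mul]
    rw [div_le_iff₀ (norm_pos_iff.mpr hCzD)]
    have hval := value_key n hn u hx hy z hz
    nlinarith [norm_nonneg (Aa u n * z + Bb u n), norm_nonneg (Cc u n * z + Dd u n),
      Complex.sq_norm (Aa u n * z + Bb u n), Complex.sq_norm (Cc u n * z + Dd u n), hval]

lemma goodMap_word (ω : List (ℕ × ℕ)) (h : ∀ p ∈ ω, 2 ≤ p.2) : GoodMap (wordComp ω) := by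
  induction ω with
  | nil => exact goodMap_id
  | cons p t ih =>
      have e : wordComp (p::t) = phi p.1 p.2 ∘ wordComp t := rfl
      rw [e]
      exact (goodMap_phi p.1 p.2 (h p List.mem_cons_self)).comp
        (ih fun q hq => h q (List.mem_cons_of_mem p hq))

end Main

/-- For every finite word ω over I restricted to n > 1 and z, w ∈ 𝔻,
|φ'_ω(z)| ≤ 5.03661 · |φ'_ω(w)|. -/
theorem apollonian_distortion_bound_n_gt_one (ω : List (ℕ × ℕ))
    (hω : ∀ p ∈ ω, p ∈ apolI ∧ 1 < p.2)
    (z w : ℂ) (hz : z ∈ unitD) (hw : w ∈ unitD) :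
    ‖deriv (wordComp ω) z‖ ≤ 5.03661 * ‖deriv (wordComp ω) w‖ := by
  obtain ⟨a, b, c, d, hdet, H⟩ := goodMap_word ω (fun p hp => (hω p hp).2)
  have hz1 : ‖z‖ ≤ 1 := by
    simpa [unitD, Complex.dist_eq] using hz
  have hw1 : ‖w‖ ≤ 1 := by
    simpa [unitD, Complex.dist_eq] using hw
  have hz27 : ‖z‖ ≤ 27/10 := by linarith
  have hw27 : ‖w‖ ≤ 27/10 := by linarith
  have hder : ∀ ζ : ℂ, ‖ζ‖ ≤ 1 →
      deriv (wordComp ω) ζ = (a*d - b*c)/(c*ζ+d)^2 := by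
    intro ζ hζ
    have hmem : Metric.ball (0:ℂ) (27/10) ∈ nhds ζ := by
      apply Metric.isOpen_ball.mem_nhds
      simp only [Metric.mem_ball, Complex.dist_eq, sub_zero]
      calc ‖ζ‖ ≤ 1 := hζ
      _ < 27/10 := by norm_num
    have heq : wordComp ω =ᶠ[nhds ζ] fun y => (a*y+b)/(c*y+d) := by
      filter_upwards [hmem] with y hy
      have hy' : ‖y‖ ≤ 27/10 := by
        have := Metric.mem_ball.mp hy
        rw [Complex.dist_eq, sub_zero] at this
        linarith
      exact (H y hy').2.1
    rw [heq.deriv_eq]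
    have hcd : c*ζ+d ≠ 0 := (H ζ (by linarith)).1
    have h1 : HasDerivAt (fun y : ℂ => a*y+b) a ζ := by
      simpa using ((hasDerivAt_id ζ).const_mul a).add_const b
    have h2 : HasDerivAt (fun y : ℂ => c*y+d) c ζ := by
      simpa using ((hasDerivAt_id ζ).const_mul c).add_const d
    have h3 : HasDerivAt (fun y : ℂ => (a*y+b)/(c*y+d)) ((a * (c * ζ + d) - (a * ζ + b) * c) / (c * ζ + d) ^ 2) ζ := h1.div h2 hcd
    rw [h3.deriv]
    congr 1
    ring
  rw [hder z hz1, hder w hw1, norm_div, norm_div, norm_pow, norm_pow]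
  have hP := (H z hz27).1
  have hQ := (H w hw27).1
  have hPpos : 0 < ‖c*z+d‖ := norm_pos_iff.mpr hP
  have hQpos : 0 < ‖c*w+d‖ := norm_pos_iff.mpr hQ
  have hD : 0 < ‖a*d-b*c‖ := norm_pos_iff.mpr hdet
  have hdc : 27/10 * ‖c‖ ≤ ‖d‖ := by
    by_contra hlt
    push_neg at hlt
    have hc0 : c ≠ 0 := by
      intro h0
      rw [h0] at hlt
      simp only [norm_zero, mul_zero] at hlt
      exact absurd hlt (not_lt.mpr (norm_nonneg d))
    have hζ : ‖-(d/c)‖ ≤ 27/10 := by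
      rw [norm_neg, norm_div, div_le_iff₀ (norm_pos_iff.mpr hc0)]
      linarith
    have h0 := (H (-(d/c)) hζ).1
    apply h0
    field_simp
    ring
  have hPl : ‖d‖ - ‖c‖ ≤ ‖c*z+d‖ := by
    have t : ‖d‖ ≤ ‖c*z+d‖ + ‖c*z‖ := by
      calc ‖d‖ = ‖(c*z+d) + (-(c*z))‖ := by congr 1; ring
      _ ≤ ‖c*z+d‖ + ‖-(c*z)‖ := norm_add_le _ _
      _ = ‖c*z+d‖ + ‖c*z‖ := by rw [norm_neg]
    have t2 : ‖c*z‖ ≤ ‖c‖ := by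
      rw [norm_mul]
      nlinarith [norm_nonneg c, norm_nonneg z]
    linarith
  have hQu : ‖c*w+d‖ ≤ ‖d‖ + ‖c‖ := by
    calc ‖c*w+d‖ ≤ ‖c*w‖ + ‖d‖ := norm_add_le _ _
    _ ≤ ‖c‖ + ‖d‖ := by
        rw [norm_mul]
        nlinarith [norm_nonneg c, norm_nonneg w]
    _ = ‖d‖ + ‖c‖ := by ring
  have hkey : ‖c*w+d‖^2 ≤ 5.03661 * ‖c*z+d‖^2 := by
    have hc0 : 0 ≤ ‖c‖ := norm_nonneg c
    have hd0 : 0 ≤ ‖d‖ := norm_nonneg d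
    have hnum : (5.03661:ℝ) = 503661/100000 := by norm_num
    rw [hnum]
    nlinarith [hPl, hQu, hdc, hc0, hd0, hPpos.le, hQpos.le,
      mul_nonneg hc0 hc0, sq_nonneg (‖d‖ - 27/10 * ‖c‖),
      mul_nonneg (mul_nonneg hc0 hc0) (sub_nonneg.mpr hdc)]
  rw [show (5.03661:ℝ) * (‖a*d-b*c‖ / ‖c*w+d‖^2)
      = (5.03661 * ‖a*d-b*c‖) / ‖c*w+d‖^2 by ring]
  rw [div_le_div_iff₀ (by positivity) (by positivity)]
  nlinarith [mul_le_mul_of_nonneg_left hkey hD.le]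

end
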